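/- arXiv:2508.06920 — 2 statements merged into one kernel-verified Lean document; each statement's English description precedes it below -/
import Mathlib

section
/- Let (𝔄_k)_{k∈ℕ} be an increasing sequence of sub-σ-algebras of the σ-algebra of Ω such that for every measurable set A ⊆ Ω and every ε > 0 there exist k and B ∈ 𝔄_k with μ(A Δ B) < ε. Let n(k) → ∞ and L(k) → ∞ be sequences of positive integers such that for every k the family of σ-algebras (G^{-i·n(k)}𝔄_k)_{i=1,…,L(k)} is mutually independent, where G^{-p}𝔄 = {G^{-p}(A) : A ∈ 𝔄}. Then for every finite measurable partition ξ of Ω, lim_{k→∞} (1/L(k))·H(⋁_{i=1}^{L(k)} G^{-i·n(k)}ξ) = H(ξ). In particular, G has completely positive P-entropy for P_k = {n(k), 2n(k), …, L(k)n(k)}: the limit is positive for every partition with H(ξ) > 0. -/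
open MeasureTheory Filter
open scoped ENNReal

/-- Shannon entropy of a finite family of sets (intended: a finite measurable partition),
with the convention `0 * log 0 = 0` (via `ENNReal.toReal` and `Real.log 0 = 0`). -/
noncomputable def partEntropy {Ω : Type*} [MeasurableSpace Ω] (μ : Measure Ω)
    {ι : Type*} [Fintype ι] (C : ι → Set Ω) : ℝ :=
  -∑ i, (μ (C i)).toReal * Real.log (μ (C i)).toReal

/-- `C` is a finite measurable partition of `Ω`. -/
def IsPartition {Ω : Type*} [MeasurableSpace Ω] {ι : Type*} (C : ι → Set Ω) : Prop :=
  (∀ i, MeasurableSet (C i)) ∧ (Pairwise fun i j => Disjoint (C i) (C j)) ∧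
    (⋃ i, C i) = Set.univ

/-- Entropy of the join `⋁_{j=0}^{m-1} G^{-j} ξ` of a partition `ξ = C`. -/
noncomputable def blockEntropy {Ω : Type*} [MeasurableSpace Ω] (μ : Measure Ω)
    (G : Equiv.Perm Ω) {N : ℕ} (m : ℕ) (C : Fin N → Set Ω) : ℝ :=
  partEntropy μ (fun f : Fin m → Fin N => ⋂ j : Fin m, ⇑(G ^ (j : ℕ)) ⁻¹' C (f j))

/-- Entropy of the join `⋁_{i=1}^{L} G^{-i·n} ξ` of a partition `ξ = C` along the
arithmetic progression `{n, 2n, …, Ln}`. -/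
noncomputable def progEntropy {Ω : Type*} [MeasurableSpace Ω] (μ : Measure Ω)
    (G : Equiv.Perm Ω) {N : ℕ} (n L : ℕ) (C : Fin N → Set Ω) : ℝ :=
  partEntropy μ (fun f : Fin L → Fin N => ⋂ i : Fin L, ⇑(G ^ (((i : ℕ) + 1) * n)) ⁻¹' C (f i))



open MeasureTheory Filter Real Finset
open scoped ENNReal

lemma myNegMulLog_le_two_sqrt {x : ℝ} (hx : 0 ≤ x) : Real.negMulLog x ≤ 2 * Real.sqrt x := by
  rcases eq_or_lt_of_le hx with h | h
  · simp [← h]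
  · have hs : 0 < Real.sqrt x := Real.sqrt_pos.2 h
    have h1 : Real.log (1 / Real.sqrt x) ≤ 1 / Real.sqrt x := by
      calc Real.log (1 / Real.sqrt x) ≤ 1 / Real.sqrt x - 1 :=
            Real.log_le_sub_one_of_pos (by positivity)
        _ ≤ 1 / Real.sqrt x := by linarith
    have h2 : -Real.log x = 2 * Real.log (1 / Real.sqrt x) := by
      rw [Real.log_div one_ne_zero (ne_of_gt hs), Real.log_one, Real.log_sqrt hx]; ring
    have hnml : Real.negMulLog x = x * (-Real.log x) := by simp only [Real.negMulLog]; ring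
    rw [hnml, h2]
    have hsq : Real.sqrt x * Real.sqrt x = x := Real.mul_self_sqrt hx
    have h3 : x * (2 * (1 / Real.sqrt x)) = 2 * Real.sqrt x := by
      field_simp
      nlinarith [hsq]
    calc x * (2 * Real.log (1 / Real.sqrt x)) ≤ x * (2 * (1 / Real.sqrt x)) := by
          apply mul_le_mul_of_nonneg_left _ hx
          nlinarith [h1]
      _ = 2 * Real.sqrt x := h3

lemma myNegMulLog_le_add {a r : ℝ} (ha : 0 ≤ a) (hr : 0 ≤ r) (h1 : a + r ≤ 1) :
    Real.negMulLog a ≤ Real.negMulLog (a + r) + r := by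
  rcases eq_or_lt_of_le ha with h | h
  · subst h
    have h2 : 0 ≤ Real.negMulLog (0 + r) := Real.negMulLog_nonneg (by linarith) h1
    rw [zero_add] at h2
    simpa using by linarith
  · rcases eq_or_lt_of_le hr with h' | h'
    · simp [← h']
    · have har : 0 < a + r := by linarith
      have hlog : Real.log (a + r) - Real.log a ≤ r / a := by
        rw [← Real.log_div (ne_of_gt har) (ne_of_gt h)]
        calc Real.log ((a + r) / a) ≤ (a + r) / a - 1 :=
              Real.log_le_sub_one_of_pos (by positivity)
          _ = r / a := by field_simp; ring
      have hlog2 : Real.log (a + r) ≤ 0 := Real.log_nonpos (le_of_lt har) h1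
      simp only [Real.negMulLog]
      have : -a * Real.log a + (a + r) * Real.log (a + r)
          = a * (Real.log (a+r) - Real.log a) + r * Real.log (a+r) := by ring
      nlinarith [mul_le_mul_of_nonneg_left hlog (le_of_lt h),
        mul_nonpos_of_nonneg_of_nonpos hr hlog2, (by field_simp : a * (r / a) = r)]

/-- Gibbs' inequality. -/
lemma myGibbs {ι : Type*} [Fintype ι] (p q : ι → ℝ) (hp : ∀ i, 0 ≤ p i)
    (hq : ∀ i, 0 ≤ q i) (h0 : ∀ i, q i = 0 → p i = 0) (hs : ∑ i, q i ≤ ∑ i, p i) :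
    ∑ i, Real.negMulLog (p i) ≤ ∑ i, -(p i * Real.log (q i)) := by
  have key : ∀ i, Real.negMulLog (p i) + p i * Real.log (q i) ≤ q i - p i := by
    intro i
    rcases eq_or_lt_of_le (hp i) with h | h
    · simp [← h, hq i]
    · have hqi : 0 < q i := lt_of_le_of_ne (hq i) (fun h' => by
        have := h0 i h'.symm; linarith)
      have : Real.negMulLog (p i) + p i * Real.log (q i) = p i * Real.log (q i / p i) := by
        rw [Real.log_div (ne_of_gt hqi) (ne_of_gt h)]
        simp [Real.negMulLog]; ring
      rw [this]
      calc p i * Real.log (q i / p i) ≤ p i * (q i / p i - 1) :=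
            mul_le_mul_of_nonneg_left (Real.log_le_sub_one_of_pos (by positivity)) (le_of_lt h)
        _ = q i - p i := by field_simp
  calc ∑ i, Real.negMulLog (p i) = ∑ i, (Real.negMulLog (p i) + p i * Real.log (q i))
        + ∑ i, -(p i * Real.log (q i)) := by rw [← Finset.sum_add_distrib]; ring_nf
    _ ≤ (∑ i, q i - ∑ i, p i) + ∑ i, -(p i * Real.log (q i)) := by
        gcongr
        rw [← Finset.sum_sub_distrib]
        exact Finset.sum_le_sum fun i _ => key i
    _ ≤ ∑ i, -(p i * Real.log (q i)) := by linarith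

lemma myNegMulLog_sum_le {ι : Type*} (s : Finset ι) (p : ι → ℝ) (hp : ∀ i ∈ s, 0 ≤ p i) :
    Real.negMulLog (∑ i ∈ s, p i) ≤ ∑ i ∈ s, Real.negMulLog (p i) := by
  have hS : ∀ i ∈ s, p i ≤ ∑ j ∈ s, p j := fun i hi =>
    Finset.single_le_sum hp hi
  have hrw : Real.negMulLog (∑ i ∈ s, p i) = ∑ i ∈ s, -(p i * Real.log (∑ j ∈ s, p j)) := by
    simp only [Real.negMulLog, neg_mul]
    rw [Finset.sum_neg_distrib, ← Finset.sum_mul]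
  rw [hrw]
  apply Finset.sum_le_sum
  intro i hi
  rcases eq_or_lt_of_le (hp i hi) with h | h
  · simp [← h]
  · simp only [Real.negMulLog, neg_mul]
    have : Real.log (p i) ≤ Real.log (∑ j ∈ s, p j) := Real.log_le_log h (hS i hi)
    nlinarith

lemma myCoarse_le {κ ι : Type*} [Fintype κ] [Fintype ι] [DecidableEq ι] (p : κ → ℝ)
    (hp : ∀ w, 0 ≤ p w) (pr : κ → ι) :
    ∑ j, Real.negMulLog (∑ w ∈ Finset.univ.filter (fun w => pr w = j), p w)
      ≤ ∑ w, Real.negMulLog (p w) := by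
  rw [← Finset.sum_fiberwise Finset.univ pr (fun w => Real.negMulLog (p w))]
  apply Finset.sum_le_sum
  intro j _
  exact myNegMulLog_sum_le _ p (fun w _ => hp w)

lemma myNegMulLog_prod {ι : Type*} [Fintype ι] [DecidableEq ι] (x : ι → ℝ) :
    Real.negMulLog (∏ i, x i) = ∑ i, Real.negMulLog (x i) * ∏ j ∈ Finset.univ.erase i, x j := by
  by_cases hz : ∃ i, x i = 0
  · obtain ⟨i0, hi0⟩ := hz
    have hP : ∏ i, x i = 0 := Finset.prod_eq_zero (Finset.mem_univ i0) hi0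
    rw [hP]
    rw [Finset.sum_eq_single i0]
    · simp [hi0]
    · intro j _ hj
      have : ∏ k ∈ Finset.univ.erase j, x k = 0 :=
        Finset.prod_eq_zero (Finset.mem_erase.2 ⟨Ne.symm hj, Finset.mem_univ i0⟩) hi0
      simp [this]
    · simp
  · push_neg at hz
    rw [Real.negMulLog, Real.log_prod (fun i _ => hz i), Finset.mul_sum]
    apply Finset.sum_congr rfl
    intro i _
    rw [← Finset.mul_prod_erase Finset.univ x (Finset.mem_univ i)]
    simp [Real.negMulLog]; ring

section Part
variable {Ω : Type*} [MeasurableSpace Ω] {μ : Measure Ω}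

lemma partEntropy_eq (μ : Measure Ω) {ι : Type*} [Fintype ι] (C : ι → Set Ω) :
    partEntropy μ C = ∑ i, Real.negMulLog ((μ (C i)).toReal) := by
  simp [partEntropy, Real.negMulLog, ← Finset.sum_neg_distrib]

lemma IsPartition.measure_eq_sum_fiber {κ ι : Type*} [Fintype κ] [DecidableEq ι]
    {Q : κ → Set Ω} (hQ : IsPartition Q)
    {R : ι → Set Ω} (hR : Pairwise fun i j => Disjoint (R i) (R j)) (pr : κ → ι)
    (hsub : ∀ w, Q w ⊆ R (pr w)) (j : ι) :
    μ (R j) = ∑ w ∈ Finset.univ.filter (fun w => pr w = j), μ (Q w) := by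
  have hset : R j = ⋃ w ∈ Finset.univ.filter (fun w => pr w = j), Q w := by
    ext x
    constructor
    · intro hx
      have hx2 : x ∈ ⋃ w, Q w := hQ.2.2 ▸ Set.mem_univ x
      obtain ⟨w, hw⟩ := Set.mem_iUnion.1 hx2
      have hpw : pr w = j := by
        by_contra hne
        exact Set.disjoint_left.1 (hR hne) (hsub w hw) hx
      exact Set.mem_biUnion
          (show w ∈ Finset.univ.filter (fun w => pr w = j) by simp [hpw]) hw
    · intro hx
      obtain ⟨w, hw, hxw⟩ := Set.mem_iUnion₂.1 hx
      have : pr w = j := by simpa using hw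
      exact this ▸ hsub w hxw
  rw [hset, measure_biUnion_finset ?_ (fun w _ => hQ.1 w)]
  intro a _ b _ hab
  exact hQ.2.1 hab

lemma IsPartition.sum_measure [IsProbabilityMeasure μ] {κ : Type*} [Fintype κ]
    {Q : κ → Set Ω} (hQ : IsPartition Q) : ∑ w, μ (Q w) = 1 := by
  have := hQ.measure_eq_sum_fiber (μ := μ) (R := fun _ : Unit => Set.univ)
    (by intro i j hij; exact absurd rfl hij) (fun _ => ()) (fun w => Set.subset_univ _) ()
  simpa using this.symm

lemma IsPartition.sum_toReal [IsProbabilityMeasure μ] {κ : Type*} [Fintype κ]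
    {Q : κ → Set Ω} (hQ : IsPartition Q) : ∑ w, (μ (Q w)).toReal = 1 := by
  rw [← ENNReal.toReal_sum (fun w _ => measure_ne_top μ _), hQ.sum_measure]
  simp

lemma IsPartition.toReal_eq_sum_fiber [IsProbabilityMeasure μ] {κ ι : Type*} [Fintype κ]
    [DecidableEq ι] {Q : κ → Set Ω} (hQ : IsPartition Q)
    {R : ι → Set Ω} (hR : Pairwise fun i j => Disjoint (R i) (R j)) (pr : κ → ι)
    (hsub : ∀ w, Q w ⊆ R (pr w)) (j : ι) :
    (μ (R j)).toReal = ∑ w ∈ Finset.univ.filter (fun w => pr w = j), (μ (Q w)).toReal := by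
  rw [hQ.measure_eq_sum_fiber hR pr hsub j, ENNReal.toReal_sum (fun w _ => measure_ne_top μ _)]

lemma isPartition_pi {L : ℕ} {κ : Type*} {P : Fin L → κ → Set Ω}
    (h : ∀ i, IsPartition (P i)) : IsPartition (fun f : Fin L → κ => ⋂ i, P i (f i)) := by
  refine ⟨fun f => MeasurableSet.iInter (fun i => (h i).1 _), ?_, ?_⟩
  · intro f g hfg
    obtain ⟨i, hi⟩ := Function.ne_iff.1 hfg
    exact Set.disjoint_of_subset (Set.iInter_subset _ i) (Set.iInter_subset _ i) ((h i).2.1 hi)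
  · ext x
    simp only [Set.mem_iUnion, Set.mem_iInter, Set.mem_univ, iff_true]
    have hx : ∀ i, ∃ b, x ∈ P i b := fun i =>
      Set.mem_iUnion.1 ((h i).2.2 ▸ Set.mem_univ x)
    choose g hg using hx
    exact ⟨g, hg⟩

lemma isPartition_pair {ι κ : Type*} {C : ι → Set Ω} {D : κ → Set Ω}
    (hC : IsPartition C) (hD : IsPartition D) :
    IsPartition (fun ab : ι × κ => C ab.1 ∩ D ab.2) := by
  refine ⟨fun ab => (hC.1 ab.1).inter (hD.1 ab.2), ?_, ?_⟩
  · intro ab cd h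
    by_cases h1 : ab.1 = cd.1
    · have h2 : ab.2 ≠ cd.2 := fun h2 => h (Prod.ext_iff.2 ⟨h1, h2⟩)
      exact Set.disjoint_of_subset Set.inter_subset_right Set.inter_subset_right (hD.2.1 h2)
    · exact Set.disjoint_of_subset Set.inter_subset_left Set.inter_subset_left (hC.2.1 h1)
  · ext x
    simp only [Set.mem_iUnion, Set.mem_inter_iff, Set.mem_univ, iff_true, Prod.exists]
    obtain ⟨i, hi⟩ := Set.mem_iUnion.1 (hC.2.2 ▸ Set.mem_univ x)
    obtain ⟨j, hj⟩ := Set.mem_iUnion.1 (hD.2.2 ▸ Set.mem_univ x)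
    exact ⟨i, j, hi, hj⟩

lemma IsPartition.preimage {ι : Type*} {C : ι → Set Ω} (h : IsPartition C) {f : Ω → Ω}
    (hf : Measurable f) : IsPartition fun i => f ⁻¹' (C i) := by
  refine ⟨fun i => hf (h.1 i), fun i j hij => Disjoint.preimage f (h.2.1 hij), ?_⟩
  rw [← Set.preimage_iUnion, h.2.2, Set.preimage_univ]

lemma measurePreserving_pow {μ : Measure Ω} (G : Equiv.Perm Ω)
    (hG : MeasurePreserving G μ μ) (m : ℕ) : MeasurePreserving (⇑(G ^ m)) μ μ := by
  induction m with
  | zero => simpa using MeasurePreserving.id μ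
  | succ m ih =>
      have h : ⇑(G ^ (m + 1)) = ⇑(G ^ m) ∘ ⇑G := by
        funext x; rw [pow_succ]; rfl
      rw [h]
      exact ih.comp hG

end Part

section Ent
variable {Ω : Type*} [MeasurableSpace Ω] {μ : Measure Ω} [IsProbabilityMeasure μ]

lemma sum_mul_comp {κ ι : Type*} [Fintype κ] [Fintype ι] [DecidableEq ι]
    (p : κ → ℝ) (pr : κ → ι) (c : ι → ℝ) :
    ∑ w, p w * c (pr w)
      = ∑ j, (∑ w ∈ Finset.univ.filter (fun w => pr w = j), p w) * c j := by
  rw [← Finset.sum_fiberwise Finset.univ pr (fun w => p w * c (pr w))]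
  refine Finset.sum_congr rfl fun j _ => ?_
  rw [Finset.sum_mul]
  refine Finset.sum_congr rfl fun w hw => ?_
  rw [(Finset.mem_filter.1 hw).2]

lemma IsPartition.toReal_inter_sum {κ : Type*} [Fintype κ] {S : κ → Set Ω}
    (hS : IsPartition S) {A : Set Ω} (hA : MeasurableSet A) :
    (μ A).toReal = ∑ b, (μ (A ∩ S b)).toReal := by
  have h1 : A = ⋃ b ∈ Finset.univ, A ∩ S b := by
    rw [← Finset.set_biUnion_coe, Finset.coe_univ, Set.biUnion_univ, ← Set.inter_iUnion,
      hS.2.2, Set.inter_univ]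
  have h2 : μ A = ∑ b, μ (A ∩ S b) := by
    conv_lhs => rw [h1]
    rw [measure_biUnion_finset ?_ (fun b _ => hA.inter (hS.1 b))]
    intro a _ b _ hab
    exact Set.disjoint_of_subset Set.inter_subset_right Set.inter_subset_right (hS.2.1 hab)
  rw [h2, ENNReal.toReal_sum (fun b _ => measure_ne_top μ _)]

lemma partEntropy_coarse {κ ι : Type*} [Fintype κ] [Fintype ι]
    {Q : κ → Set Ω} (hQ : IsPartition Q) {R : ι → Set Ω}
    (hR : Pairwise fun i j => Disjoint (R i) (R j)) (pr : κ → ι)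
    (hsub : ∀ w, Q w ⊆ R (pr w)) :
    partEntropy μ R ≤ partEntropy μ Q := by
  classical
  rw [partEntropy_eq, partEntropy_eq]
  refine le_trans (le_of_eq ?_)
    (myCoarse_le (fun w => (μ (Q w)).toReal) (fun w => ENNReal.toReal_nonneg) pr)
  exact Finset.sum_congr rfl fun j _ => by rw [hQ.toReal_eq_sum_fiber hR pr hsub j]

lemma partEntropy_pi_le {L : ℕ} {κ : Type*} [Fintype κ] {P : Fin L → κ → Set Ω}
    (h : ∀ i, IsPartition (P i)) :
    partEntropy μ (fun f : Fin L → κ => ⋂ i, P i (f i)) ≤ ∑ i, partEntropy μ (P i) := by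
  classical
  set p : (Fin L → κ) → ℝ := fun f => (μ (⋂ i, P i (f i))).toReal with hp_def
  set m : Fin L → κ → ℝ := fun i b => (μ (P i b)).toReal with hm_def
  have hpi := isPartition_pi h
  have hple : ∀ (f : Fin L → κ) i, p f ≤ m i (f i) := fun f i =>
    ENNReal.toReal_mono (measure_ne_top μ _) (measure_mono (Set.iInter_subset _ i))
  have hp0 : ∀ f, 0 ≤ p f := fun f => ENNReal.toReal_nonneg
  have hmarg : ∀ i b, m i b = ∑ f ∈ Finset.univ.filter (fun f : Fin L → κ => f i = b), p f :=
    fun i b => hpi.toReal_eq_sum_fiber (h i).2.1 (fun f => f i)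
      (fun f => Set.iInter_subset _ i) b
  have gibbs := myGibbs p (fun f => ∏ i, m i (f i)) hp0
    (fun f => Finset.prod_nonneg fun i _ => ENNReal.toReal_nonneg) ?_ ?_
  · rw [partEntropy_eq]
    refine le_trans gibbs (le_of_eq ?_)
    have key : ∀ f, -(p f * Real.log (∏ i, m i (f i)))
        = ∑ i, -(p f * Real.log (m i (f i))) := by
      intro f
      rcases eq_or_lt_of_le (hp0 f) with h0 | h0
      · simp [← h0]
      · have hne : ∀ i ∈ Finset.univ, m i (f i) ≠ 0 :=
          fun i _ => ne_of_gt (lt_of_lt_of_le h0 (hple f i))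
        rw [Real.log_prod hne, Finset.mul_sum, ← Finset.sum_neg_distrib]
    rw [Finset.sum_congr rfl (fun f _ => key f), Finset.sum_comm]
    refine Finset.sum_congr rfl fun i _ => ?_
    rw [partEntropy_eq, Finset.sum_neg_distrib,
      sum_mul_comp p (fun f => f i) (fun b => Real.log (m i b)), ← Finset.sum_neg_distrib]
    refine Finset.sum_congr rfl fun b _ => ?_
    rw [← hmarg i b]
    simp only [Real.negMulLog, neg_mul, hm_def]
  · intro f hf
    obtain ⟨i, _, hi⟩ := Finset.prod_eq_zero_iff.1 hf
    have h1 : μ (P i (f i)) = 0 := by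
      rcases (ENNReal.toReal_eq_zero_iff _).1 hi with h | h
      · exact h
      · exact absurd h (measure_ne_top μ _)
    have h2 : μ (⋂ j, P j (f j)) = 0 :=
      le_antisymm (h1 ▸ measure_mono (Set.iInter_subset _ i)) zero_le
    simp only [hp_def, h2, ENNReal.toReal_zero]
  · rw [hpi.sum_toReal, ← Fintype.prod_sum]
    refine le_of_eq (Finset.prod_eq_one fun i _ => ?_)
    exact (h i).sum_toReal

lemma partEntropy_indep_eq {L : ℕ} {κ : Type*} [Fintype κ] {S : Fin L → κ → Set Ω}
    (hS : ∀ i, IsPartition (S i))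
    (hind : ∀ g : Fin L → κ, μ (⋂ i, S i (g i)) = ∏ i, μ (S i (g i))) :
    partEntropy μ (fun g : Fin L → κ => ⋂ i, S i (g i)) = ∑ i, partEntropy μ (S i) := by
  classical
  rw [partEntropy_eq]
  set x : Fin L → κ → ℝ := fun j b => (μ (S j b)).toReal with hx_def
  set F : Fin L → Fin L → κ → ℝ :=
    fun i j b => if j = i then Real.negMulLog (x j b) else x j b with hF_def
  calc ∑ g : Fin L → κ, Real.negMulLog ((μ (⋂ i, S i (g i))).toReal)
      = ∑ g : Fin L → κ, ∑ i, Real.negMulLog (x i (g i)) * ∏ j ∈ Finset.univ.erase i, x j (g j) := by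
        refine Finset.sum_congr rfl fun g _ => ?_
        rw [hind g, ENNReal.toReal_prod, myNegMulLog_prod]
    _ = ∑ i, ∑ g : Fin L → κ, ∏ j, F i j (g j) := by
        rw [Finset.sum_comm]
        refine Finset.sum_congr rfl fun i _ => Finset.sum_congr rfl fun g _ => ?_
        rw [← Finset.mul_prod_erase Finset.univ (fun j => F i j (g j)) (Finset.mem_univ i)]
        have h1 : F i i (g i) = Real.negMulLog (x i (g i)) := by simp [hF_def]
        have h2 : ∏ j ∈ Finset.univ.erase i, F i j (g j) = ∏ j ∈ Finset.univ.erase i, x j (g j) :=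
          Finset.prod_congr rfl fun j hj => by
            simp [hF_def, (Finset.mem_erase.1 hj).1]
        rw [h1, h2]
    _ = ∑ i, ∏ j, ∑ b, F i j b := by
        refine Finset.sum_congr rfl fun i _ => ?_
        rw [Fintype.prod_sum]
    _ = ∑ i, partEntropy μ (S i) := by
        refine Finset.sum_congr rfl fun i _ => ?_
        rw [partEntropy_eq]
        rw [Finset.prod_eq_single i (fun j _ hj => ?_) (fun h => absurd (Finset.mem_univ i) h)]
        · have : ∑ b, F i i b = ∑ b, Real.negMulLog (x i b) :=
            Finset.sum_congr rfl fun b _ => by simp [hF_def]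
          rw [this]
        · have : ∑ b, F i j b = ∑ b, x j b := Finset.sum_congr rfl fun b _ => by
            simp [hF_def, hj]
          rw [this, hx_def]
          exact (hS j).sum_toReal

end Ent

section Ent2
variable {Ω : Type*} [MeasurableSpace Ω] {μ : Measure Ω} [IsProbabilityMeasure μ]

lemma partEntropy_chain {L : ℕ} {κ : Type*} [Fintype κ] {P S : Fin L → κ → Set Ω}
    (hP : ∀ i, IsPartition (P i)) (hS : ∀ i, IsPartition (S i)) :
    partEntropy μ (fun w : Fin L → κ × κ => ⋂ i, (P i (w i).1 ∩ S i (w i).2))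
      ≤ partEntropy μ (fun f : Fin L → κ => ⋂ i, P i (f i))
        + ∑ i, (partEntropy μ (fun ab : κ × κ => P i ab.1 ∩ S i ab.2)
            - partEntropy μ (P i)) := by
  classical
  have hPSpart : ∀ i, IsPartition (fun ab : κ × κ => P i ab.1 ∩ S i ab.2) :=
    fun i => isPartition_pair (hP i) (hS i)
  have hpi : IsPartition (fun w : Fin L → κ × κ => ⋂ i, P i (w i).1 ∩ S i (w i).2) :=
    isPartition_pi hPSpart
  have hPpi : IsPartition (fun f : Fin L → κ => ⋂ i, P i (f i)) := isPartition_pi hP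
  set p : (Fin L → κ × κ) → ℝ := fun w => (μ (⋂ i, P i (w i).1 ∩ S i (w i).2)).toReal with hp_def
  set mP : (Fin L → κ) → ℝ := fun f => (μ (⋂ i, P i (f i))).toReal with hmP_def
  set num : Fin L → κ × κ → ℝ := fun i ab => (μ (P i ab.1 ∩ S i ab.2)).toReal with hnum_def
  set den : Fin L → κ → ℝ := fun i a => (μ (P i a)).toReal with hden_def
  set q : (Fin L → κ × κ) → ℝ :=
    fun w => mP (fun i => (w i).1) * ∏ i, (num i (w i) / den i ((w i).1)) with hq_def
  have hp0 : ∀ w, 0 ≤ p w := fun w => ENNReal.toReal_nonneg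
  have hsub1 : ∀ w : Fin L → κ × κ,
      (⋂ i, P i (w i).1 ∩ S i (w i).2) ⊆ ⋂ i, P i ((w i).1) :=
    fun w => Set.iInter_mono fun i => Set.inter_subset_left
  have hsub2 : ∀ (w : Fin L → κ × κ) i,
      (⋂ j, P j (w j).1 ∩ S j (w j).2) ⊆ P i ((w i).1) :=
    fun w i => (Set.iInter_subset _ i).trans Set.inter_subset_left
  have hple1 : ∀ w, p w ≤ mP (fun i => (w i).1) := fun w =>
    ENNReal.toReal_mono (measure_ne_top μ _) (measure_mono (hsub1 w))
  have hple2 : ∀ w i, p w ≤ num i (w i) := fun w i =>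
    ENNReal.toReal_mono (measure_ne_top μ _) (measure_mono (Set.iInter_subset _ i))
  have hnd : ∀ i ab, num i ab ≤ den i ab.1 := fun i ab =>
    ENNReal.toReal_mono (measure_ne_top μ _) (measure_mono Set.inter_subset_left)
  have hnum0 : ∀ i ab, 0 ≤ num i ab := fun i ab => ENNReal.toReal_nonneg
  have hden0 : ∀ i a, 0 ≤ den i a := fun i a => ENNReal.toReal_nonneg
  have hsumnum : ∀ i a, ∑ b, num i (a, b) = den i a := fun i a =>
    ((hS i).toReal_inter_sum ((hP i).1 a)).symm
  have hq0 : ∀ w, 0 ≤ q w := fun w => mul_nonneg ENNReal.toReal_nonneg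
    (Finset.prod_nonneg fun i _ => div_nonneg (hnum0 i _) (hden0 i _))
  have hqz : ∀ w, q w = 0 → p w = 0 := by
    intro w hw
    rcases mul_eq_zero.1 hw with h | h
    · exact le_antisymm (h ▸ hple1 w) (hp0 w)
    · obtain ⟨i, _, hi⟩ := Finset.prod_eq_zero_iff.1 h
      rcases div_eq_zero_iff.1 hi with h' | h'
      · exact le_antisymm (h' ▸ hple2 w i) (hp0 w)
      · have h'' : num i (w i) = 0 := le_antisymm (h' ▸ hnd i (w i)) (hnum0 i _)
        exact le_antisymm (h'' ▸ hple2 w i) (hp0 w)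
  have hsumq : ∑ w, q w ≤ ∑ w, p w := by
    rw [hpi.sum_toReal]
    have h1 : ∑ w, q w = ∑ fg : (Fin L → κ) × (Fin L → κ),
        mP fg.1 * ∏ i, (num i (fg.1 i, fg.2 i) / den i (fg.1 i)) := by
      refine Fintype.sum_equiv (Equiv.arrowProdEquivProdArrow (Fin L) (fun _ => κ) (fun _ => κ)) _ _ fun w => ?_
      simp [Equiv.arrowProdEquivProdArrow, hq_def]
    rw [h1, Fintype.sum_prod_type]
    have hfact : ∀ (f : Fin L → κ) (i : Fin L), ∑ b, (num i (f i, b) / den i (f i)) ≤ 1 := by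
      intro f i
      rw [← Finset.sum_div, hsumnum i (f i)]
      rcases eq_or_lt_of_le (hden0 i (f i)) with h | h
      · rw [← h]; norm_num
      · rw [div_self (ne_of_gt h)]
    calc ∑ f : Fin L → κ, ∑ g : Fin L → κ, mP f * ∏ i, (num i (f i, g i) / den i (f i))
        = ∑ f : Fin L → κ, mP f * ∑ g : Fin L → κ, ∏ i, (num i (f i, g i) / den i (f i)) := by
          exact Finset.sum_congr rfl fun f _ => (Finset.mul_sum _ _ _).symm
      _ ≤ ∑ f : Fin L → κ, mP f * 1 := by
          refine Finset.sum_le_sum fun f _ => ?_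
          refine mul_le_mul_of_nonneg_left ?_ ENNReal.toReal_nonneg
          rw [← Fintype.prod_sum (fun i b => num i (f i, b) / den i (f i))]
          exact Finset.prod_le_one
            (fun i _ => Finset.sum_nonneg fun b _ => div_nonneg (hnum0 i _) (hden0 i _))
            (fun i _ => hfact f i)
      _ = 1 := by
          simp only [mul_one]
          exact hPpi.sum_toReal
  have gibbs := myGibbs p q hp0 hq0 hqz hsumq
  rw [partEntropy_eq]
  refine le_trans gibbs (le_of_eq ?_)
  have key : ∀ w, -(p w * Real.log (q w))
      = -(p w * Real.log (mP (fun i => (w i).1)))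
        + ∑ i, (-(p w * Real.log (num i (w i))) + p w * Real.log (den i ((w i).1))) := by
    intro w
    rcases eq_or_lt_of_le (hp0 w) with h0 | h0
    · simp [← h0]
    · have hmPpos : 0 < mP (fun i => (w i).1) := lt_of_lt_of_le h0 (hple1 w)
      have hnum' : ∀ i, 0 < num i (w i) := fun i => lt_of_lt_of_le h0 (hple2 w i)
      have hden' : ∀ i, 0 < den i ((w i).1) := fun i => lt_of_lt_of_le (hnum' i) (hnd i (w i))
      have hlog : Real.log (q w) = Real.log (mP (fun i => (w i).1))
          + ∑ i, (Real.log (num i (w i)) - Real.log (den i ((w i).1))) := by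
        rw [hq_def]
        rw [Real.log_mul (ne_of_gt hmPpos)
          (ne_of_gt (Finset.prod_pos fun i _ => div_pos (hnum' i) (hden' i)))]
        rw [Real.log_prod (fun i _ => ne_of_gt (div_pos (hnum' i) (hden' i)))]
        congr 1
        exact Finset.sum_congr rfl fun i _ =>
          Real.log_div (ne_of_gt (hnum' i)) (ne_of_gt (hden' i))
      rw [hlog, mul_add, neg_add]
      congr 1
      rw [Finset.mul_sum, ← Finset.sum_neg_distrib]
      exact Finset.sum_congr rfl fun i _ => by ring
  rw [Finset.sum_congr rfl fun w _ => key w, Finset.sum_add_distrib]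
  congr 1
  · rw [Finset.sum_neg_distrib,
      sum_mul_comp p (fun w => fun i => (w i).1) (fun f => Real.log (mP f)),
      partEntropy_eq, ← Finset.sum_neg_distrib]
    refine Finset.sum_congr rfl fun f _ => ?_
    rw [← hpi.toReal_eq_sum_fiber hPpi.2.1 (fun w => fun i => (w i).1) hsub1 f]
    simp only [Real.negMulLog, neg_mul, hmP_def]
  · rw [Finset.sum_comm]
    refine Finset.sum_congr rfl fun i _ => ?_
    rw [Finset.sum_add_distrib, sub_eq_add_neg]
    congr 1
    · rw [Finset.sum_neg_distrib,
        sum_mul_comp p (fun w => w i) (fun ab => Real.log (num i ab)),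
        partEntropy_eq, ← Finset.sum_neg_distrib]
      refine Finset.sum_congr rfl fun ab _ => ?_
      rw [← hpi.toReal_eq_sum_fiber (hPSpart i).2.1 (fun w => w i)
        (fun w => Set.iInter_subset _ i) ab]
      simp only [Real.negMulLog, neg_mul, hnum_def]
    · rw [sum_mul_comp p (fun w => (w i).1) (fun a => Real.log (den i a)),
        partEntropy_eq, ← Finset.sum_neg_distrib]
      refine Finset.sum_congr rfl fun a _ => ?_
      rw [← hpi.toReal_eq_sum_fiber (hP i).2.1 (fun w => (w i).1) (fun w => hsub2 w i) a]
      simp only [Real.negMulLog, neg_mul, hden_def, neg_neg]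
end Ent2

section Ent3
variable {Ω : Type*} [MeasurableSpace Ω] {μ : Measure Ω} [IsProbabilityMeasure μ]

omit [IsProbabilityMeasure μ] in
lemma partEntropy_pair_comm {ι κ : Type*} [Fintype ι] [Fintype κ]
    (C : ι → Set Ω) (D : κ → Set Ω) :
    partEntropy μ (fun ab : ι × κ => C ab.1 ∩ D ab.2)
      = partEntropy μ (fun ba : κ × ι => D ba.1 ∩ C ba.2) := by
  rw [partEntropy_eq, partEntropy_eq]
  refine Fintype.sum_equiv (Equiv.prodComm ι κ) _ _ fun ab => ?_
  simp [Set.inter_comm]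

lemma partEntropy_pair_le_of_close {N : ℕ} {C D : Fin N → Set Ω}
    (hC : IsPartition C) (hD : IsPartition D) {δ : ℝ} (hδ : 0 ≤ δ)
    (hsum : ∑ i, (μ (symmDiff (C i) (D i))).toReal ≤ δ) :
    partEntropy μ (fun ab : Fin N × Fin N => C ab.1 ∩ D ab.2)
      ≤ partEntropy μ D + (δ + 2 * (N : ℝ) ^ 2 * Real.sqrt δ) := by
  classical
  set p : Fin N → Fin N → ℝ := fun a b => (μ (C a ∩ D b)).toReal with hp_def
  have hp0 : ∀ a b, 0 ≤ p a b := fun a b => ENNReal.toReal_nonneg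
  have htr1 : ∀ s : Set Ω, (μ s).toReal ≤ 1 := fun s => by
    have := ENNReal.toReal_mono (by norm_num : (1 : ℝ≥0∞) ≠ ⊤) (prob_le_one (μ := μ) (s := s))
    simpa using this
  have hd : ∀ b, (μ (D b)).toReal = ∑ a, p a b := by
    intro b
    rw [hC.toReal_inter_sum (hD.1 b)]
    exact Finset.sum_congr rfl fun a _ => by rw [Set.inter_comm]
  have hdle : ∀ b, p b b ≤ (μ (D b)).toReal := fun b => by
    rw [hd b]
    exact Finset.single_le_sum (fun a _ => hp0 a b) (Finset.mem_univ b)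
  have hdiffsub : ∀ b, (D b \ C b : Set Ω) ⊆ symmDiff (C b) (D b) := fun b => by
    rw [Set.symmDiff_def]
    exact Set.subset_union_right
  have herr : ∀ b, (μ (D b)).toReal - p b b ≤ (μ (symmDiff (C b) (D b))).toReal := by
    intro b
    have h1 : μ (D b ∩ C b) + μ (D b \ C b) = μ (D b) := measure_inter_add_diff (D b) (hC.1 b)
    have h2 : (μ (D b ∩ C b)).toReal + (μ (D b \ C b)).toReal = (μ (D b)).toReal := by
      rw [← ENNReal.toReal_add (measure_ne_top μ _) (measure_ne_top μ _), h1]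
    have h3 : (μ (D b \ C b)).toReal ≤ (μ (symmDiff (C b) (D b))).toReal :=
      ENNReal.toReal_mono (measure_ne_top μ _) (measure_mono (hdiffsub b))
    have h4 : p b b = (μ (D b ∩ C b)).toReal := by rw [hp_def]; rw [Set.inter_comm]
    linarith
  have hoff : ∀ a b, a ≠ b → p a b ≤ δ := by
    intro a b hab
    have h1 : (C a ∩ D b : Set Ω) ⊆ D b \ C b := by
      intro x hx
      exact ⟨hx.2, fun hxb => Set.disjoint_left.1 (hC.2.1 hab) hx.1 hxb⟩
    have h2 : p a b ≤ (μ (symmDiff (C b) (D b))).toReal :=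
      ENNReal.toReal_mono (measure_ne_top μ _) (measure_mono (h1.trans (hdiffsub b)))
    refine h2.trans (le_trans ?_ hsum)
    exact Finset.single_le_sum (f := fun i => (μ (symmDiff (C i) (D i))).toReal)
      (fun i _ => ENNReal.toReal_nonneg) (Finset.mem_univ b)
  rw [partEntropy_eq, partEntropy_eq, Fintype.sum_prod_type_right]
  have hb : ∀ b, ∑ a, Real.negMulLog (p a b)
      ≤ Real.negMulLog ((μ (D b)).toReal) + ((μ (D b)).toReal - p b b)
        + (N : ℝ) * (2 * Real.sqrt δ) := by
    intro b
    rw [← Finset.add_sum_erase _ _ (Finset.mem_univ b)]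
    have h1 : Real.negMulLog (p b b)
        ≤ Real.negMulLog ((μ (D b)).toReal) + ((μ (D b)).toReal - p b b) := by
      have := myNegMulLog_le_add (a := p b b) (r := (μ (D b)).toReal - p b b) (hp0 b b)
        (by linarith [hdle b]) (by rw [add_sub_cancel]; exact htr1 _)
      rwa [add_sub_cancel] at this
    have h2 : ∑ a ∈ Finset.univ.erase b, Real.negMulLog (p a b)
        ≤ (N : ℝ) * (2 * Real.sqrt δ) := by
      refine le_trans (Finset.sum_le_sum (f := fun a => Real.negMulLog (p a b))
        (g := fun _ => 2 * Real.sqrt δ) fun a ha => ?_) ?_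
      · show Real.negMulLog (p a b) ≤ 2 * Real.sqrt δ
        refine le_trans (myNegMulLog_le_two_sqrt (hp0 a b)) ?_
        have := hoff a b (Finset.mem_erase.1 ha).1
        have hs := Real.sqrt_le_sqrt this
        linarith
      · rw [Finset.sum_const, nsmul_eq_mul]
        have hcard : ((Finset.univ.erase b).card : ℝ) ≤ (N : ℝ) := by
          have h := Finset.card_erase_le (s := (Finset.univ : Finset (Fin N))) (a := b)
          have : (Finset.univ : Finset (Fin N)).card = N := Finset.card_univ.trans (Fintype.card_fin N)
          exact_mod_cast this ▸ Nat.cast_le.2 h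
        have hnn : 0 ≤ 2 * Real.sqrt δ := by positivity
        nlinarith
    linarith
  calc ∑ b, ∑ a, Real.negMulLog (p a b)
      ≤ ∑ b, (Real.negMulLog ((μ (D b)).toReal) + ((μ (D b)).toReal - p b b)
          + (N : ℝ) * (2 * Real.sqrt δ)) := Finset.sum_le_sum fun b _ => hb b
    _ ≤ ∑ b, Real.negMulLog ((μ (D b)).toReal) + (δ + 2 * (N : ℝ) ^ 2 * Real.sqrt δ) := by
        rw [Finset.sum_add_distrib, Finset.sum_add_distrib, Finset.sum_const,
          Finset.card_univ, Fintype.card_fin, nsmul_eq_mul]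
        have hδsum : ∑ b, ((μ (D b)).toReal - p b b) ≤ δ := by
          refine le_trans (Finset.sum_le_sum fun b _ => herr b) hsum
        have : (N : ℝ) * ((N : ℝ) * (2 * Real.sqrt δ)) = 2 * (N : ℝ) ^ 2 * Real.sqrt δ := by ring
        linarith
end Ent3

section Approx
variable {Ω : Type*} [mΩ : MeasurableSpace Ω]

lemma approx_partition (μ : Measure Ω) [IsProbabilityMeasure μ]
    (𝔄 : ℕ → MeasurableSpace Ω) (h𝔄mono : Monotone 𝔄) (h𝔄le : ∀ k, 𝔄 k ≤ mΩ)
    (h𝔄dense : ∀ A : Set Ω, MeasurableSet A → ∀ ε : ℝ≥0∞, 0 < ε →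
      ∃ k, ∃ B : Set Ω, MeasurableSet[𝔄 k] B ∧ μ (symmDiff A B) < ε)
    {N : ℕ} (hN : 0 < N) {C : Fin N → Set Ω} (hC : IsPartition C)
    {δ : ℝ} (hδ : 0 < δ) :
    ∃ k₀, ∃ D : Fin N → Set Ω, (∀ i, MeasurableSet[𝔄 k₀] (D i)) ∧ IsPartition D ∧
      ∑ i, (μ (symmDiff (C i) (D i))).toReal ≤ δ := by
  classical
  set ε : ℝ := δ / ((N : ℝ)^2 + 1) with hε_def
  have hεpos : 0 < ε := by positivity
  have hdense' : ∀ i : Fin N, ∃ k, ∃ B : Set Ω, MeasurableSet[𝔄 k] B ∧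
      μ (symmDiff (C i) B) < ENNReal.ofReal ε :=
    fun i => h𝔄dense (C i) (hC.1 i) _ (ENNReal.ofReal_pos.2 hεpos)
  choose k B hBmeas hBclose using hdense'
  set k₀ := Finset.univ.sup k with hk₀
  have hBk₀ : ∀ i, MeasurableSet[𝔄 k₀] (B i) :=
    fun i => h𝔄mono (Finset.le_sup (Finset.mem_univ i)) _ (hBmeas i)
  set B' : Fin N → Set Ω := fun i => B i \ ⋃ j : Fin N, ⋃ (_ : j < i), B j with hB'
  set i₀ : Fin N := ⟨0, hN⟩ with hi₀
  set D : Fin N → Set Ω := fun i => if i = i₀ then B' i₀ ∪ (⋃ j, B' j)ᶜ else B' i with hD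
  set E : Set Ω := ⋃ j, symmDiff (C j) (B j) with hE
  have hB'k₀ : ∀ i, MeasurableSet[𝔄 k₀] (B' i) := fun i =>
    (hBk₀ i).diff (MeasurableSet.iUnion fun j => MeasurableSet.iUnion fun _ => hBk₀ j)
  have hDk₀ : ∀ i, MeasurableSet[𝔄 k₀] (D i) := by
    intro i
    rw [hD]
    by_cases hi : i = i₀
    · simp only [if_pos hi]
      exact (hB'k₀ i₀).union (MeasurableSet.iUnion fun j => hB'k₀ j).compl
    · simp only [if_neg hi]
      exact hB'k₀ i
  have hCcover : ∀ x : Ω, ∃ i, x ∈ C i := fun x =>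
    Set.mem_iUnion.1 (hC.2.2 ▸ Set.mem_univ x)
  have hB'subE : ∀ i, symmDiff (C i) (B' i) ⊆ E := by
    intro i x hx
    rw [Set.mem_symmDiff] at hx
    rcases hx with ⟨hxC, hxB'⟩ | ⟨hxB', hxC⟩
    · by_cases hxB : x ∈ B i
      · have hxU : x ∈ ⋃ j : Fin N, ⋃ (_ : j < i), B j := by
          by_contra hcon
          exact hxB' ⟨hxB, hcon⟩
        obtain ⟨j, hj⟩ := Set.mem_iUnion.1 hxU
        obtain ⟨hji, hxBj⟩ := Set.mem_iUnion.1 hj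
        have hxCj : x ∉ C j := fun hxCj =>
          Set.disjoint_left.1 (hC.2.1 (ne_of_lt hji)) hxCj hxC
        exact Set.mem_iUnion.2 ⟨j, Set.mem_symmDiff.2 (Or.inr ⟨hxBj, hxCj⟩)⟩
      · exact Set.mem_iUnion.2 ⟨i, Set.mem_symmDiff.2 (Or.inl ⟨hxC, hxB⟩)⟩
    · have hxB : x ∈ B i := hxB'.1
      exact Set.mem_iUnion.2 ⟨i, Set.mem_symmDiff.2 (Or.inr ⟨hxB, hxC⟩)⟩
  have hDsubE : ∀ i, symmDiff (C i) (D i) ⊆ E := by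
    intro i x hx
    by_cases hi : i = i₀
    · subst hi
      rw [hD] at hx
      simp only [if_pos rfl] at hx
      rw [Set.mem_symmDiff] at hx
      rcases hx with ⟨hxC, hxD⟩ | ⟨hxD, hxC⟩
      · have hxB' : x ∉ B' i₀ := fun h => hxD (Or.inl h)
        have hxU : x ∈ ⋃ j, B' j := by
          by_contra h
          exact hxD (Or.inr h)
        obtain ⟨j, hxj⟩ := Set.mem_iUnion.1 hxU
        have hji : j ≠ i₀ := fun h => hxB' (h ▸ hxj)
        have hxCj : x ∉ C j := fun hxCj =>
          Set.disjoint_left.1 (hC.2.1 hji) hxCj hxC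
        exact hB'subE j (Set.mem_symmDiff.2 (Or.inr ⟨hxj, hxCj⟩))
      · rcases hxD with hxB' | hxcomp
        · exact hB'subE i₀ (Set.mem_symmDiff.2 (Or.inr ⟨hxB', hxC⟩))
        · obtain ⟨j, hxCj⟩ := hCcover x
          have hxB'j : x ∉ B' j := fun h => hxcomp (Set.mem_iUnion.2 ⟨j, h⟩)
          exact hB'subE j (Set.mem_symmDiff.2 (Or.inl ⟨hxCj, hxB'j⟩))
    · rw [hD] at hx
      simp only [if_neg hi] at hx
      exact hB'subE i hx
  have hB'disj : ∀ i j : Fin N, j < i → Disjoint (B' i) (B' j) := by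
    intro i j hji
    rw [Set.disjoint_left]
    intro x hxi hxj
    exact hxi.2 (Set.mem_iUnion.2 ⟨j, Set.mem_iUnion.2 ⟨hji, hxj.1⟩⟩)
  have hB'pair : Pairwise fun i j => Disjoint (B' i) (B' j) := by
    intro i j hij
    rcases lt_or_gt_of_ne hij with h | h
    · exact (hB'disj j i h).symm
    · exact hB'disj i j h
  have hDpair : Pairwise fun i j => Disjoint (D i) (D j) := by
    have key : ∀ j, j ≠ i₀ → Disjoint (D i₀) (D j) := by
      intro j hj
      rw [hD]
      simp only [if_pos rfl, if_neg hj]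
      refine Set.disjoint_union_left.2 ⟨hB'pair (Ne.symm hj), ?_⟩
      rw [Set.disjoint_left]
      intro x hx hxj
      exact hx (Set.mem_iUnion.2 ⟨j, hxj⟩)
    intro i j hij
    by_cases hi : i = i₀
    · subst hi; exact key j (Ne.symm hij)
    · by_cases hj : j = i₀
      · subst hj; exact (key i hi).symm
      · rw [hD]; simp only [if_neg hi, if_neg hj]
        exact hB'pair hij
  have hDuniv : (⋃ i, D i) = Set.univ := by
    apply Set.eq_univ_of_forall
    intro x
    by_cases hx : x ∈ ⋃ j, B' j
    · obtain ⟨j, hj⟩ := Set.mem_iUnion.1 hx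
      by_cases hji : j = i₀
      · subst hji
        refine Set.mem_iUnion.2 ⟨i₀, ?_⟩
        rw [hD]; simp only [if_pos rfl]
        exact Or.inl hj
      · refine Set.mem_iUnion.2 ⟨j, ?_⟩
        rw [hD]; simp only [if_neg hji]
        exact hj
    · refine Set.mem_iUnion.2 ⟨i₀, ?_⟩
      rw [hD]; simp only [if_pos rfl]
      exact Or.inr hx
  have hEbound : (μ E).toReal ≤ (N : ℝ) * ε := by
    have h1 : μ E ≤ ∑ j, μ (symmDiff (C j) (B j)) := by
      refine le_trans (measure_iUnion_le _) ?_
      rw [tsum_fintype]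
    have h2 : ∑ j, μ (symmDiff (C j) (B j)) ≤ ∑ _j : Fin N, ENNReal.ofReal ε :=
      Finset.sum_le_sum fun j _ => (hBclose j).le
    have h3 : (∑ _j : Fin N, ENNReal.ofReal ε) = (N : ℝ≥0∞) * ENNReal.ofReal ε := by
      rw [Finset.sum_const, Finset.card_univ, Fintype.card_fin, nsmul_eq_mul]
    have h5 := ENNReal.toReal_mono
      (ENNReal.mul_ne_top (by simp) ENNReal.ofReal_ne_top)
      (le_trans h1 (le_trans h2 (le_of_eq h3)))
    rw [ENNReal.toReal_mul, ENNReal.toReal_ofReal hεpos.le] at h5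
    simpa using h5
  refine ⟨k₀, D, hDk₀, ⟨fun i => h𝔄le k₀ _ (hDk₀ i), hDpair, hDuniv⟩, ?_⟩
  have hterm : ∀ i, (μ (symmDiff (C i) (D i))).toReal ≤ (μ E).toReal := fun i =>
    ENNReal.toReal_mono (measure_ne_top μ _) (measure_mono (hDsubE i))
  calc ∑ i, (μ (symmDiff (C i) (D i))).toReal ≤ ∑ _i : Fin N, (μ E).toReal :=
        Finset.sum_le_sum fun i _ => hterm i
    _ = (N : ℝ) * (μ E).toReal := by
        rw [Finset.sum_const, Finset.card_univ, Fintype.card_fin, nsmul_eq_mul]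
    _ ≤ (N : ℝ) * ((N : ℝ) * ε) := by
        refine mul_le_mul_of_nonneg_left hEbound (Nat.cast_nonneg N)
    _ ≤ δ := by
        have h6 : (0 : ℝ) < (N : ℝ)^2 + 1 := by positivity
        have h7 : ((N : ℝ)^2 + 1) * ((N : ℝ)^2 + 1)⁻¹ = 1 := mul_inv_cancel₀ h6.ne'
        have h8 : (0 : ℝ) ≤ ((N : ℝ)^2 + 1)⁻¹ := by positivity
        rw [hε_def, div_eq_mul_inv]
        nlinarith [hδ.le]
end Approx


/-- If a dense increasing sequence of sub-σ-algebras `𝔄_k` satisfies that the shifted copies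
`G^{-i·n(k)} 𝔄_k`, `i = 1, …, L(k)`, are mutually independent, then the normalized entropy
along the progressions `{n(k), 2n(k), …, L(k)n(k)}` tends to `H(ξ)` for every finite
measurable partition `ξ`; in particular the limit is positive whenever `H(ξ) > 0`
(completely positive `P`-entropy). -/
theorem completely_positive_P_entropy
    {Ω : Type*} [mΩ : MeasurableSpace Ω] (μ : Measure Ω) [IsProbabilityMeasure μ]
    (G : Equiv.Perm Ω)
    (hG : MeasurePreserving G μ μ) (hG' : MeasurePreserving G.symm μ μ)
    (𝔄 : ℕ → MeasurableSpace Ω) (h𝔄mono : Monotone 𝔄) (h𝔄le : ∀ k, 𝔄 k ≤ mΩ)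
    (h𝔄dense : ∀ A : Set Ω, MeasurableSet A → ∀ ε : ℝ≥0∞, 0 < ε →
      ∃ k, ∃ B : Set Ω, MeasurableSet[𝔄 k] B ∧ μ (symmDiff A B) < ε)
    (n L : ℕ → ℕ) (hn_pos : ∀ k, 0 < n k) (hL_pos : ∀ k, 0 < L k)
    (hn : Tendsto n atTop atTop) (hL : Tendsto L atTop atTop)
    (hindep : ∀ k, ProbabilityTheory.iIndep
      (fun i : Fin (L k) =>
        MeasurableSpace.comap (⇑(G ^ (((i : ℕ) + 1) * n k))) (𝔄 k)) μ) :
    ∀ (N : ℕ) (C : Fin N → Set Ω), IsPartition C →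
      Tendsto (fun k : ℕ => progEntropy μ G (n k) (L k) C / (L k)) atTop
        (nhds (partEntropy μ C)) ∧
      (0 < partEntropy μ C →
        0 < limsup (fun k : ℕ => progEntropy μ G (n k) (L k) C / (L k)) atTop) := by
  intro N C hC
  have hΩ : Nonempty Ω := by
    by_contra h
    rw [not_nonempty_iff] at h
    have h1 : (Set.univ : Set Ω) = ∅ := Set.univ_eq_empty_iff.2 h
    have h2 : μ Set.univ = 1 := measure_univ
    rw [h1, measure_empty] at h2
    exact zero_ne_one h2
  rcases Nat.eq_zero_or_pos N with hN0 | hN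
  · exfalso
    obtain ⟨x⟩ := hΩ
    obtain ⟨i, _⟩ := Set.mem_iUnion.1 (hC.2.2 ▸ Set.mem_univ x)
    subst hN0
    exact i.elim0
  have hMP : ∀ m : ℕ, MeasurePreserving (⇑(G ^ m)) μ μ := measurePreserving_pow G hG
  have hPEc : ∀ (k : ℕ) (i : Fin (L k)),
      partEntropy μ (fun b => ⇑(G ^ (((i : ℕ) + 1) * n k)) ⁻¹' C b) = partEntropy μ C := by
    intro k i
    rw [partEntropy_eq, partEntropy_eq]
    refine Finset.sum_congr rfl fun b _ => ?_
    rw [(hMP _).measure_preimage (hC.1 b).nullMeasurableSet]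
  have hLpos : ∀ k, (0 : ℝ) < (L k : ℝ) := fun k => Nat.cast_pos.2 (hL_pos k)
  have hub : ∀ k, progEntropy μ G (n k) (L k) C / (L k) ≤ partEntropy μ C := by
    intro k
    rw [div_le_iff₀ (hLpos k)]
    have h1 : progEntropy μ G (n k) (L k) C
        ≤ ∑ i : Fin (L k), partEntropy μ (fun b => ⇑(G ^ (((i : ℕ) + 1) * n k)) ⁻¹' C b) :=
      partEntropy_pi_le (P := fun (i : Fin (L k)) b => ⇑(G ^ (((i : ℕ) + 1) * n k)) ⁻¹' C b)
        (fun i => hC.preimage (hMP _).measurable)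
    have h2 : ∑ i : Fin (L k), partEntropy μ (fun b => ⇑(G ^ (((i : ℕ) + 1) * n k)) ⁻¹' C b)
        = partEntropy μ C * (L k : ℝ) := by
      rw [Finset.sum_congr rfl fun i _ => hPEc k i, Finset.sum_const, Finset.card_univ,
        Fintype.card_fin, nsmul_eq_mul, mul_comm]
    linarith
  have hlb : ∀ ε : ℝ, 0 < ε → ∃ K, ∀ k ≥ K,
      partEntropy μ C - ε ≤ progEntropy μ G (n k) (L k) C / (L k) := by
    intro ε hε
    set c : ℝ := 1 + 2 * (N : ℝ) ^ 2 with hc_def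
    have hc : 0 < c := by positivity
    set δ : ℝ := min 1 ((ε / (4 * c)) ^ 2) with hδ_def
    have hδpos : 0 < δ := lt_min one_pos (by positivity)
    have hδ1 : δ ≤ 1 := min_le_left _ _
    have hsqrt : Real.sqrt δ ≤ ε / (4 * c) := by
      refine le_trans (Real.sqrt_le_sqrt (min_le_right _ _)) ?_
      rw [Real.sqrt_sq (by positivity)]
    have hs1 : Real.sqrt δ ≤ 1 := by
      rw [show (1 : ℝ) = Real.sqrt 1 by simp]
      exact Real.sqrt_le_sqrt hδ1
    have hδs : δ ≤ Real.sqrt δ := by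
      nlinarith [Real.mul_self_sqrt hδpos.le, Real.sqrt_nonneg δ]
    set Φ : ℝ := δ + 2 * (N : ℝ) ^ 2 * Real.sqrt δ with hΦ_def
    have hΦnn : 0 ≤ Φ := by positivity
    have hΦle : Φ ≤ ε / 4 := by
      have h1 : Φ ≤ c * Real.sqrt δ := by
        rw [hΦ_def, hc_def]
        nlinarith [Real.sqrt_nonneg δ]
      refine le_trans h1 ?_
      calc c * Real.sqrt δ ≤ c * (ε / (4 * c)) := mul_le_mul_of_nonneg_left hsqrt hc.le
        _ = ε / 4 := by field_simp
    obtain ⟨k₀, D, hDmeas, hDpart, hDclose⟩ :=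
      approx_partition μ 𝔄 h𝔄mono h𝔄le h𝔄dense hN hC hδpos
    refine ⟨k₀, fun k hk => ?_⟩
    set P : Fin (L k) → Fin N → Set Ω :=
      fun i b => ⇑(G ^ (((i : ℕ) + 1) * n k)) ⁻¹' C b with hP_def
    set S : Fin (L k) → Fin N → Set Ω :=
      fun i b => ⇑(G ^ (((i : ℕ) + 1) * n k)) ⁻¹' D b with hS_def
    have hPpart : ∀ i, IsPartition (P i) := fun i => hC.preimage (hMP _).measurable
    have hSpart : ∀ i, IsPartition (S i) := fun i => hDpart.preimage (hMP _).measurable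
    have hind : ∀ g : Fin (L k) → Fin N, μ (⋂ i, S i (g i)) = ∏ i, μ (S i (g i)) := by
      intro g
      exact (hindep k).meas_iInter fun i => ⟨D (g i), h𝔄mono hk _ (hDmeas (g i)), rfl⟩
    have hSE : ∀ i, partEntropy μ (S i) = partEntropy μ D := by
      intro i
      rw [partEntropy_eq, partEntropy_eq]
      refine Finset.sum_congr rfl fun b _ => ?_
      rw [hS_def]
      rw [(hMP _).measure_preimage (hDpart.1 b).nullMeasurableSet]
    have hPE : ∀ i : Fin (L k), partEntropy μ (P i) = partEntropy μ C := fun i => hPEc k i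
    have hPSE : ∀ i : Fin (L k),
        partEntropy μ (fun ab : Fin N × Fin N => P i ab.1 ∩ S i ab.2)
          = partEntropy μ (fun ab : Fin N × Fin N => C ab.1 ∩ D ab.2) := by
      intro i
      rw [partEntropy_eq, partEntropy_eq]
      refine Finset.sum_congr rfl fun ab _ => ?_
      rw [hP_def, hS_def]
      rw [show ⇑(G ^ (((i : ℕ) + 1) * n k)) ⁻¹' C ab.1 ∩ ⇑(G ^ (((i : ℕ) + 1) * n k)) ⁻¹' D ab.2
          = ⇑(G ^ (((i : ℕ) + 1) * n k)) ⁻¹' (C ab.1 ∩ D ab.2) from (Set.preimage_inter).symm]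
      rw [(hMP _).measure_preimage ((hC.1 ab.1).inter (hDpart.1 ab.2)).nullMeasurableSet]
    have step1 : (L k : ℝ) * partEntropy μ D
        = partEntropy μ (fun g : Fin (L k) → Fin N => ⋂ i, S i (g i)) := by
      rw [partEntropy_indep_eq hSpart hind]
      rw [Finset.sum_congr rfl fun i _ => hSE i, Finset.sum_const, Finset.card_univ,
        Fintype.card_fin, nsmul_eq_mul]
    have step2 : partEntropy μ (fun g : Fin (L k) → Fin N => ⋂ i, S i (g i))
        ≤ partEntropy μ (fun w : Fin (L k) → Fin N × Fin N =>
            ⋂ i, (P i (w i).1 ∩ S i (w i).2)) := by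
      refine partEntropy_coarse (μ := μ)
        (Q := fun w : Fin (L k) → Fin N × Fin N => ⋂ i, (P i (w i).1 ∩ S i (w i).2))
        (R := fun g : Fin (L k) → Fin N => ⋂ i, S i (g i))
        (pr := fun w => fun i => (w i).2) ?_ ?_ ?_
      · exact isPartition_pi (P := fun i (ab : Fin N × Fin N) => P i ab.1 ∩ S i ab.2)
          (fun i => isPartition_pair (hPpart i) (hSpart i))
      · exact (isPartition_pi hSpart).2.1
      · exact fun w => Set.iInter_mono fun i => Set.inter_subset_right
    have step3 := partEntropy_chain (μ := μ) hPpart hSpart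
    have hpairD : partEntropy μ (fun ab : Fin N × Fin N => C ab.1 ∩ D ab.2)
        ≤ partEntropy μ D + Φ := partEntropy_pair_le_of_close hC hDpart hδpos.le hDclose
    have hpairC : partEntropy μ (fun ab : Fin N × Fin N => C ab.1 ∩ D ab.2)
        ≤ partEntropy μ C + Φ := by
      rw [partEntropy_pair_comm]
      refine partEntropy_pair_le_of_close hDpart hC hδpos.le ?_
      refine le_trans (le_of_eq ?_) hDclose
      exact Finset.sum_congr rfl fun i _ => by rw [symmDiff_comm]
    have hCle : partEntropy μ C
        ≤ partEntropy μ (fun ab : Fin N × Fin N => C ab.1 ∩ D ab.2) := by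
      refine partEntropy_coarse (isPartition_pair hC hDpart) hC.2.1 Prod.fst ?_
      exact fun ab => Set.inter_subset_left
    have hsum1 : ∑ i : Fin (L k),
        (partEntropy μ (fun ab : Fin N × Fin N => P i ab.1 ∩ S i ab.2) - partEntropy μ (P i))
        = (L k : ℝ) * (partEntropy μ (fun ab : Fin N × Fin N => C ab.1 ∩ D ab.2)
            - partEntropy μ C) := by
      rw [Finset.sum_congr rfl fun i _ => by rw [hPSE i, hPE i], Finset.sum_const,
        Finset.card_univ, Fintype.card_fin, nsmul_eq_mul]
    have hprogeq : partEntropy μ (fun f : Fin (L k) → Fin N => ⋂ i, P i (f i))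
        = progEntropy μ G (n k) (L k) C := rfl
    rw [hsum1, hprogeq] at step3
    have m1 : (L k : ℝ) * (partEntropy μ C - Φ) ≤ (L k : ℝ) * partEntropy μ D := by
      refine mul_le_mul_of_nonneg_left ?_ (hLpos k).le
      linarith
    have m2 : (L k : ℝ) * (partEntropy μ (fun ab : Fin N × Fin N => C ab.1 ∩ D ab.2)
        - partEntropy μ C) ≤ (L k : ℝ) * Φ := by
      refine mul_le_mul_of_nonneg_left ?_ (hLpos k).le
      linarith
    rw [le_div_iff₀ (hLpos k)]
    nlinarith [hLpos k]
  have main : Tendsto (fun k : ℕ => progEntropy μ G (n k) (L k) C / (L k)) atTop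
      (nhds (partEntropy μ C)) := by
    rw [Metric.tendsto_atTop]
    intro ε hε
    obtain ⟨K, hK⟩ := hlb (ε / 2) (by positivity)
    refine ⟨K, fun k hk => ?_⟩
    rw [Real.dist_eq, abs_sub_lt_iff]
    constructor
    · have := hub k
      linarith
    · have := hK k hk
      linarith
  exact ⟨main, fun hpos => by rw [main.limsup_eq]; exact hpos⟩
end

section
/- For every finitely supported sequence a : ℕ →₀ ℝ, the pushforward of μ under the functional ℓ_a is the Gaussian measure on ℝ with mean 0 and variance Σ_n a_n², i.e. μ.map ℓ_a = gaussianReal 0 (Σ_n a_n²). -/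
open MeasureTheory Filter
open scoped ENNReal

/-- The measurable linear functional `ℓ_a(x) = Σ_n a_n · x_n` on `ℝ^ℕ` associated with a
finitely supported sequence `a`. -/
noncomputable def ell (a : ℕ →₀ ℝ) (x : ℕ → ℝ) : ℝ :=
  ∑ n ∈ a.support, a n * x n

/-- `μ` is the infinite product on `ℝ^ℕ` of standard Gaussian measures: it is a probability
measure whose finite-dimensional marginals are the corresponding finite products of
`gaussianReal 0 1`. -/
def IsGaussianProduct (μ : Measure (ℕ → ℝ)) : Prop :=
  IsProbabilityMeasure μ ∧
    ∀ s : Finset ℕ,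
      μ.map (fun x (i : ↥s) => x i) =
        Measure.pi (fun _ : ↥s => ProbabilityTheory.gaussianReal 0 1)



open ProbabilityTheory Real
open scoped NNReal

variable {α β : Type*} [MeasurableSpace α] [MeasurableSpace β]

lemma aux_withDensity_prod (μ : Measure α) (ν : Measure β) [SigmaFinite μ] [SigmaFinite ν]
    {f : α → ℝ≥0∞} {g : β → ℝ≥0∞} (hf : Measurable f) (hg : Measurable g)
    [SigmaFinite (μ.withDensity f)] [SigmaFinite (ν.withDensity g)] :
    (μ.withDensity f).prod (ν.withDensity g) =
      (μ.prod ν).withDensity (fun p => f p.1 * g p.2) := by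
  refine Measure.prod_eq fun s t hs ht => ?_
  rw [withDensity_apply _ (hs.prod ht), ← Measure.prod_restrict,
    lintegral_prod_mul hf.aemeasurable hg.aemeasurable,
    withDensity_apply _ hs, withDensity_apply _ ht]

lemma aux_map_withDensity (e : α ≃ᵐ β) (μ : Measure α) {ρ : α → ℝ≥0∞} (hρ : Measurable ρ) :
    (μ.withDensity ρ).map e = (μ.map e).withDensity (ρ ∘ e.symm) := by
  ext s hs
  rw [Measure.map_apply e.measurable hs, withDensity_apply _ (e.measurable hs),
    withDensity_apply _ hs, Measure.restrict_map e.measurable hs,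
    lintegral_map (hρ.comp e.symm.measurable) e.measurable]
  simp

noncomputable def rotL (c s : ℝ) : (ℝ × ℝ) →ₗ[ℝ] (ℝ × ℝ) :=
  LinearMap.prod (c • LinearMap.fst ℝ ℝ ℝ + s • LinearMap.snd ℝ ℝ ℝ)
    ((-s) • LinearMap.fst ℝ ℝ ℝ + c • LinearMap.snd ℝ ℝ ℝ)

lemma rotL_apply (c s : ℝ) (p : ℝ × ℝ) :
    rotL c s p = (c * p.1 + s * p.2, -s * p.1 + c * p.2) := by
  simp [rotL, smul_eq_mul]

lemma rotL_det (c s : ℝ) : LinearMap.det (rotL c s) = c ^ 2 + s ^ 2 := by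
  rw [← LinearMap.det_toMatrix (Module.Basis.finTwoProd ℝ), Matrix.det_fin_two]
  simp [LinearMap.toMatrix_apply, rotL_apply]
  ring

def rotE (c s : ℝ) (h : c ^ 2 + s ^ 2 = 1) : (ℝ × ℝ) ≃ᵐ (ℝ × ℝ) where
  toFun p := (c * p.1 + s * p.2, -s * p.1 + c * p.2)
  invFun p := (c * p.1 - s * p.2, s * p.1 + c * p.2)
  left_inv p := by
    ext
    · simp only; linear_combination p.1 * h
    · simp only; linear_combination p.2 * h
  right_inv p := by
    ext
    · simp only; linear_combination p.1 * h
    · simp only; linear_combination p.2 * h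
  measurable_toFun := by measurability
  measurable_invFun := by measurability

lemma rot_volume (c s : ℝ) (h : c ^ 2 + s ^ 2 = 1) :
    (volume : Measure (ℝ × ℝ)).map (rotE c s h) = volume := by
  have hc : ⇑(rotE c s h) = ⇑(rotL c s) := by
    funext p; rw [rotL_apply]; rfl
  rw [hc, Measure.map_linearMap_addHaar_eq_smul_addHaar _ (by rw [rotL_det, h]; norm_num),
    rotL_det, h]
  norm_num

lemma gaussianPDFReal_rot (c s : ℝ) (h : c ^ 2 + s ^ 2 = 1) (x y : ℝ) :
    gaussianPDFReal 0 1 (c * x - s * y) * gaussianPDFReal 0 1 (s * x + c * y)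
      = gaussianPDFReal 0 1 x * gaussianPDFReal 0 1 y := by
  simp only [gaussianPDFReal, sub_zero, NNReal.coe_one, mul_one]
  rw [mul_mul_mul_comm, ← Real.exp_add, mul_mul_mul_comm (√(2 * π))⁻¹, ← Real.exp_add]
  congr 1
  congr 1
  linear_combination (-(x ^ 2 + y ^ 2) / 2) * h

lemma gauss_prod_withDensity :
    (gaussianReal 0 1).prod (gaussianReal 0 1) =
      ((volume : Measure ℝ).prod volume).withDensity
        (fun p => gaussianPDF 0 1 p.1 * gaussianPDF 0 1 p.2) := by
  haveI : SigmaFinite ((volume : Measure ℝ).withDensity (gaussianPDF 0 1)) := by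
    rw [← gaussianReal_of_var_ne_zero 0 one_ne_zero]; infer_instance
  rw [gaussianReal_of_var_ne_zero 0 one_ne_zero,
    aux_withDensity_prod _ _ (measurable_gaussianPDF 0 1) (measurable_gaussianPDF 0 1)]

lemma gauss_rot (c s : ℝ) (h : c ^ 2 + s ^ 2 = 1) :
    ((gaussianReal 0 1).prod (gaussianReal 0 1)).map (rotE c s h) =
      (gaussianReal 0 1).prod (gaussianReal 0 1) := by
  have hρ : Measurable (fun p : ℝ × ℝ => gaussianPDF 0 1 p.1 * gaussianPDF 0 1 p.2) :=
    ((measurable_gaussianPDF 0 1).comp measurable_fst).mul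
      ((measurable_gaussianPDF 0 1).comp measurable_snd)
  rw [gauss_prod_withDensity, aux_map_withDensity _ _ hρ, ← Measure.volume_eq_prod, rot_volume,
    Measure.volume_eq_prod]
  congr 1
  funext p
  show gaussianPDF 0 1 (c * p.1 - s * p.2) * gaussianPDF 0 1 (s * p.1 + c * p.2) = _
  simp only [gaussianPDF]
  rw [← ENNReal.ofReal_mul (gaussianPDFReal_nonneg _ _ _),
    ← ENNReal.ofReal_mul (gaussianPDFReal_nonneg _ _ _), gaussianPDFReal_rot c s h]

lemma gauss_map_rot (c s : ℝ) (h : c ^ 2 + s ^ 2 = 1) :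
    ((gaussianReal 0 1).prod (gaussianReal 0 1)).map (fun p : ℝ × ℝ => c * p.1 + s * p.2) =
      gaussianReal 0 1 := by
  have : (fun p : ℝ × ℝ => c * p.1 + s * p.2) = Prod.fst ∘ (rotE c s h) := rfl
  rw [this, ← Measure.map_map measurable_fst (rotE c s h).measurable, gauss_rot,
    Measure.map_fst_prod]
  simp

lemma gauss_map_two (a b : ℝ) :
    ((gaussianReal 0 1).prod (gaussianReal 0 1)).map (fun p : ℝ × ℝ => a * p.1 + b * p.2)
      = gaussianReal 0 (‖a‖₊ ^ 2 + ‖b‖₊ ^ 2) := by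
  by_cases hab : a = 0 ∧ b = 0
  · obtain ⟨rfl, rfl⟩ := hab
    simp only [zero_mul, add_zero]
    rw [Measure.map_const]
    simp [gaussianReal_zero_var]
  · have hr2 : 0 < a ^ 2 + b ^ 2 := by
      rcases not_and_or.1 hab with h | h <;> positivity
    set r := Real.sqrt (a ^ 2 + b ^ 2) with hr
    have hrpos : 0 < r := Real.sqrt_pos.2 hr2
    have hrsq : r ^ 2 = a ^ 2 + b ^ 2 := Real.sq_sqrt hr2.le
    have h : (a / r) ^ 2 + (b / r) ^ 2 = 1 := by
      field_simp
      linarith [hrsq]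
    have hfun : (fun p : ℝ × ℝ => a * p.1 + b * p.2)
        = (fun x => r * x) ∘ (fun p : ℝ × ℝ => (a / r) * p.1 + (b / r) * p.2) := by
      funext p
      rw [Function.comp_apply]
      field_simp
    rw [hfun, ← Measure.map_map (by fun_prop) (by fun_prop), gauss_map_rot _ _ h,
      gaussianReal_map_const_mul, mul_zero]
    congr 1
    rw [mul_one]
    ext
    push_cast
    rw [hrsq]
    simp [sq_abs]

lemma gauss_scale (v : ℝ≥0) :
    (gaussianReal 0 1).map (fun x => Real.sqrt v * x) = gaussianReal 0 v := by
  rw [show (fun x : ℝ => Real.sqrt v * x) = (Real.sqrt v * ·) from rfl,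
    gaussianReal_map_const_mul, mul_zero]
  congr 1
  rw [mul_one]
  ext
  simp [Real.sq_sqrt v.2]

lemma gauss_add (v w : ℝ≥0) :
    ((gaussianReal 0 v).prod (gaussianReal 0 w)).map (fun p : ℝ × ℝ => p.1 + p.2)
      = gaussianReal 0 (v + w) := by
  rw [← gauss_scale v, ← gauss_scale w,
    Measure.map_prod_map _ _ (by fun_prop) (by fun_prop),
    Measure.map_map (by fun_prop) (by fun_prop)]
  rw [show ((fun p : ℝ × ℝ => p.1 + p.2) ∘
        Prod.map (fun x => Real.sqrt v * x) (fun x => Real.sqrt w * x))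
      = fun p : ℝ × ℝ => Real.sqrt v * p.1 + Real.sqrt w * p.2 from rfl, gauss_map_two]
  congr 1
  ext
  push_cast
  simp [Real.sq_sqrt v.2, Real.sq_sqrt w.2, sq_abs]

lemma gauss_pi_fin (n : ℕ) (c : Fin n → ℝ) :
    (Measure.pi fun _ : Fin n => gaussianReal 0 1).map (fun y => ∑ i, c i * y i)
      = gaussianReal 0 (∑ i, ‖c i‖₊ ^ 2) := by
  induction n with
  | zero =>
      rw [Measure.pi_of_empty, Measure.map_dirac' (by fun_prop)]
      simp [gaussianReal_zero_var]
  | succ n ih =>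
      have hmp := measurePreserving_piFinSuccAbove (fun _ : Fin (n + 1) => gaussianReal 0 1) 0
      have key : (fun y : Fin (n + 1) → ℝ => ∑ i, c i * y i)
          = (fun p : ℝ × (Fin n → ℝ) => c 0 * p.1 + ∑ i, c i.succ * p.2 i)
            ∘ (MeasurableEquiv.piFinSuccAbove (fun _ => ℝ) 0) := by
        funext y
        simp [MeasurableEquiv.piFinSuccAbove, Fin.sum_univ_succ, Fin.tail]
      rw [key, ← Measure.map_map (by fun_prop) (MeasurableEquiv.measurable _), hmp.map_eq]
      rw [show (fun p : ℝ × (Fin n → ℝ) => c 0 * p.1 + ∑ i, c i.succ * p.2 i)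
          = (fun q : ℝ × ℝ => q.1 + q.2) ∘ (Prod.map (fun x => c 0 * x)
              (fun z : Fin n → ℝ => ∑ i, c i.succ * z i)) from rfl]
      rw [← Measure.map_map (by fun_prop) (by fun_prop),
        ← Measure.map_prod_map _ _ (by fun_prop) (by fun_prop), ih,
        show (fun x : ℝ => c 0 * x) = (c 0 * ·) from rfl,
        gaussianReal_map_const_mul, mul_zero, gauss_add]
      congr 1
      rw [Fin.sum_univ_succ]
      congr 1
      rw [mul_one]
      ext
      push_cast
      simp [sq_abs]

lemma gauss_pi {ι : Type*} [Fintype ι] (c : ι → ℝ) :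
    (Measure.pi fun _ : ι => gaussianReal 0 1).map (fun y => ∑ i, c i * y i)
      = gaussianReal 0 (∑ i, ‖c i‖₊ ^ 2) := by
  obtain ⟨n, ⟨f⟩⟩ : ∃ n, Nonempty (Fin n ≃ ι) := ⟨Fintype.card ι, ⟨(Fintype.equivFin ι).symm⟩⟩
  have hmp := MeasureTheory.measurePreserving_piCongrLeft (fun _ : ι => gaussianReal 0 1) f
  have key : (fun y : ι → ℝ => ∑ i, c i * y i) ∘ (MeasurableEquiv.piCongrLeft (fun _ : ι => ℝ) f)
      = (fun z : Fin n → ℝ => ∑ j, c (f j) * z j) := by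
    funext z
    rw [Function.comp_apply, ← Equiv.sum_comp f]
    refine Finset.sum_congr rfl fun j _ => ?_
    congr 1
    simp [MeasurableEquiv.piCongrLeft, Equiv.piCongrLeft]
  rw [← hmp.map_eq, Measure.map_map (by fun_prop) (MeasurableEquiv.measurable _), key,
    gauss_pi_fin, ← Equiv.sum_comp f (fun i => (‖c i‖₊ ^ 2 : ℝ≥0))]

/-- The pushforward of the Gaussian product measure under `ℓ_a` is the Gaussian measure
with mean `0` and variance `Σ_n a_n²`. -/
theorem map_ell_eq_gaussianReal
    (μ : Measure (ℕ → ℝ)) (hμ : IsGaussianProduct μ) (a : ℕ →₀ ℝ) :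
    μ.map (ell a) = ProbabilityTheory.gaussianReal 0 (∑ n ∈ a.support, ‖a n‖₊ ^ 2) := by
  set s := a.support
  have key : ell a = (fun y : ↥s → ℝ => ∑ i : ↥s, a i.1 * y i) ∘ (fun x (i : ↥s) => x i) := by
    funext x
    rw [Function.comp_apply, ell, ← Finset.sum_coe_sort s (fun n => a n * x n)]
  rw [key, ← Measure.map_map (by fun_prop) (by fun_prop), hμ.2 s, gauss_pi,
    ← Finset.sum_coe_sort s (fun n => (‖a n‖₊ ^ 2 : ℝ≥0))]
end
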